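/- Fix an integer n ≥ 1 and reals a1,a2,b1,b2,c1,c2,d1,d2,e,f,g,h, and let W be the associated restricted-form matrix. Then ‖W‖_* = (n−1)·√(C_A1+C_D1+2·|a1·d1−b1·c1|) + √( C_A1+n·C_A2+C_D1+n·C_D2 + 2·√((C_A1+n·C_A2)·(C_D1+n·C_D2) − (C_B1+n·C_B2)²) ). -/

import Mathlib

/-- The nuclear norm of a real matrix: the trace of the positive semidefinite
square root of `Wᵀ * W` (equivalently, the sum of the singular values of `W`). -/
noncomputable def nuclearNorm {m k : Type*} [Fintype m] [Fintype k] [DecidableEq k]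
    (W : Matrix m k ℝ) : ℝ :=
  ((Matrix.posSemidef_conjTranspose_mul_self W).1.eigenvectorUnitary.1 *
    Matrix.diagonal ((RCLike.ofReal : ℝ → ℝ) ∘ (√·) ∘ (Matrix.posSemidef_conjTranspose_mul_self W).1.eigenvalues) *
    (star (Matrix.posSemidef_conjTranspose_mul_self W).1.eigenvectorUnitary : Matrix k k ℝ)).trace

/-- The restricted-form matrix in `ℝ^{(2n+2)×(2n)}`.  Rows are indexed by the input
tokens `a_1,…,a_n` (`Sum.inl i`), `b_1,…,b_n` (`Sum.inr (Sum.inl i)`) and the relation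
tokens `r_1, r_2` (`Sum.inr (Sum.inr k)`, `k = 0, 1`); columns by the output tokens
`b_1,…,b_n` (`Sum.inl j`) and `c_1,…,c_n` (`Sum.inr j`). -/
def restrictedW (n : ℕ) (a1 a2 b1 b2 c1 c2 d1 d2 e f g h : ℝ) :
    Matrix (Fin n ⊕ Fin n ⊕ Fin 2) (Fin n ⊕ Fin n) ℝ :=
  fun r y =>
    match r, y with
    | Sum.inl i, Sum.inl j => (if i = j then a1 else 0) + a2
    | Sum.inl i, Sum.inr j => (if i = j then c1 else 0) + c2
    | Sum.inr (Sum.inl i), Sum.inl j => (if i = j then b1 else 0) + b2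
    | Sum.inr (Sum.inl i), Sum.inr j => (if i = j then d1 else 0) + d2
    | Sum.inr (Sum.inr k), Sum.inl _ => if k = 0 then e else f
    | Sum.inr (Sum.inr k), Sum.inr _ => if k = 0 then g else h

def CA1 (a1 b1 : ℝ) : ℝ := a1 ^ 2 + b1 ^ 2
def CA2 (n : ℕ) (a1 a2 b1 b2 e f : ℝ) : ℝ :=
  2 * a1 * a2 + n * a2 ^ 2 + 2 * b1 * b2 + n * b2 ^ 2 + e ^ 2 + f ^ 2
def CD1 (c1 d1 : ℝ) : ℝ := c1 ^ 2 + d1 ^ 2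
def CD2 (n : ℕ) (c1 c2 d1 d2 g h : ℝ) : ℝ :=
  2 * c1 * c2 + n * c2 ^ 2 + 2 * d1 * d2 + n * d2 ^ 2 + g ^ 2 + h ^ 2
def CB1 (a1 b1 c1 d1 : ℝ) : ℝ := a1 * c1 + b1 * d1
def CB2 (n : ℕ) (a1 a2 b1 b2 c1 c2 d1 d2 e f g h : ℝ) : ℝ :=
  a1 * c2 + a2 * c1 + n * a2 * c2 + b1 * d2 + b2 * d1 + n * b2 * d2 + e * g + f * h

open scoped Matrix
open scoped MatrixOrder

/-! ### auxiliary lemmas -/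

lemma quad_nonneg' (p q s a b : ℝ) (hp : 0 ≤ p) (hs : 0 ≤ s) (hq : q^2 ≤ p*s) :
    0 ≤ p*a^2 + 2*q*a*b + s*b^2 := by
  rcases eq_or_lt_of_le hp with h | h
  · have hq0 : q = 0 := by nlinarith [sq_nonneg q]
    subst hq0; rw [← h]; nlinarith [sq_nonneg b]
  · nlinarith [sq_nonneg (p*a + q*b), mul_nonneg (sub_nonneg.2 hq) (sq_nonneg b)]

lemma sqrt2_facts (P Q R δ t p q s : ℝ) (hP : 0 ≤ P) (hQ : 0 ≤ Q) (hδ : 0 ≤ δ)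
    (hδ2 : δ^2 = P*Q - R^2) (ht : t = Real.sqrt (P+Q+2*δ))
    (hp : p = (P+δ)/t) (hq : q = R/t) (hs : s = (Q+δ)/t) :
    p*p + q*q = P ∧ p*q + q*s = R ∧ q*q + s*s = Q ∧
    0 ≤ p ∧ 0 ≤ s ∧ q^2 ≤ p*s ∧ p + s = t := by
  have ht0 : 0 ≤ t := ht ▸ Real.sqrt_nonneg _
  have ht2 : t^2 = P+Q+2*δ := by rw [ht]; exact Real.sq_sqrt (by linarith)
  by_cases hz : t = 0
  · have h0 : P + Q + 2*δ = 0 := by rw [← ht2, hz]; ring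
    have hP0 : P = 0 := by linarith
    have hQ0 : Q = 0 := by linarith
    have hδ0 : δ = 0 := by linarith
    have hR0 : R = 0 := by nlinarith [sq_nonneg R]
    subst hp hq hs hz
    simp [hP0, hQ0, hδ0, hR0]
  · subst hp hq hs
    refine ⟨?_, ?_, ?_, ?_, ?_, ?_, ?_⟩
    · field_simp; linear_combination hδ2 - P*ht2
    · field_simp; linear_combination (-R)*ht2
    · field_simp; linear_combination hδ2 - Q*ht2
    · exact div_nonneg (by linarith) ht0
    · exact div_nonneg (by linarith) ht0
    · have : (P+δ)/t * ((Q+δ)/t) - (R/t)^2 = δ := by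
        field_simp; linear_combination -hδ2 - δ*ht2
      nlinarith [this]
    · field_simp; linarith [ht2]

def Smat (n : ℕ) (p1 q1 s1 cu cv cw : ℝ) : Matrix (Fin n ⊕ Fin n) (Fin n ⊕ Fin n) ℝ :=
  fun x y =>
    match x, y with
    | Sum.inl j, Sum.inl k => (if j = k then p1 else 0) + cu
    | Sum.inl j, Sum.inr k => (if j = k then q1 else 0) + cv
    | Sum.inr j, Sum.inl k => (if j = k then q1 else 0) + cv
    | Sum.inr j, Sum.inr k => (if j = k then s1 else 0) + cw

open Finset in
lemma sum_if_mul_left (n : ℕ) (j k : Fin n) (x y u v : ℝ) :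
    ∑ i : Fin n, ((if i = j then x else 0) + u) * ((if i = k then y else 0) + v)
    = (if j = k then x*y else 0) + x*v + u*y + (n:ℝ)*(u*v) := by
  have h : ∀ i : Fin n, ((if i = j then x else 0) + u) * ((if i = k then y else 0) + v)
      = (if i = j then (if i = k then x*y else 0) else 0)
        + (if i = j then x*v else 0) + (if i = k then u*y else 0) + u*v := by
    intro i; split_ifs <;> ring
  rw [Finset.sum_congr rfl fun i _ => h i]
  simp only [Finset.sum_add_distrib, Finset.sum_ite_eq', Finset.mem_univ, if_true,
    Finset.sum_const, Finset.card_univ, Fintype.card_fin, nsmul_eq_mul]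

open Finset in
lemma sum_if_mul_mid (n : ℕ) (j k : Fin n) (x y u v : ℝ) :
    ∑ i : Fin n, ((if j = i then x else 0) + u) * ((if i = k then y else 0) + v)
    = (if j = k then x*y else 0) + x*v + u*y + (n:ℝ)*(u*v) := by
  rw [← sum_if_mul_left n j k x y u v]
  exact Finset.sum_congr rfl fun i _ => by
    rw [show (if j = i then x else 0) = (if i = j then x else 0) by simp [eq_comm]]

lemma sum_if_vec (n : ℕ) (j : Fin n) (a c : ℝ) (v : Fin n → ℝ) :
    ∑ i : Fin n, ((if j = i then a else 0) + c) * v i = a * v j + c * ∑ i, v i := by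
  simp [add_mul, Finset.sum_add_distrib, Finset.sum_ite_eq, ite_mul, ← Finset.mul_sum]

lemma Smat_sq (n : ℕ) (a1 a2 b1 b2 c1 c2 d1 d2 e f g h : ℝ)
    (p1 q1 s1 p2 q2 s2 cu cv cw : ℝ) (hn0 : (n:ℝ) ≠ 0)
    (F1 : p1*p1 + q1*q1 = a1^2 + b1^2)
    (F2 : p1*q1 + q1*s1 = a1*c1 + b1*d1)
    (F3 : q1*q1 + s1*s1 = c1^2 + d1^2)
    (G1 : p2*p2 + q2*q2 = (a1^2+b1^2) + n*(2*a1*a2 + n*a2^2 + 2*b1*b2 + n*b2^2 + e^2 + f^2))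
    (G2 : p2*q2 + q2*s2 = (a1*c1+b1*d1)
      + n*(a1*c2 + a2*c1 + n*(a2*c2) + b1*d2 + b2*d1 + n*(b2*d2) + e*g + f*h))
    (G3 : q2*q2 + s2*s2 = (c1^2+d1^2) + n*(2*c1*c2 + n*c2^2 + 2*d1*d2 + n*d2^2 + g^2 + h^2))
    (hcu : (n:ℝ)*cu = p2 - p1) (hcv : (n:ℝ)*cv = q2 - q1) (hcw : (n:ℝ)*cw = s2 - s1) :
    Smat n p1 q1 s1 cu cv cw * Smat n p1 q1 s1 cu cv cw
      = (restrictedW n a1 a2 b1 b2 c1 c2 d1 d2 e f g h)ᴴ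
        * restrictedW n a1 a2 b1 b2 c1 c2 d1 d2 e f g h := by
  have hc_bb : 2*p1*cu + (n:ℝ)*(cu*cu) + 2*q1*cv + n*(cv*cv)
      = 2*a1*a2 + n*a2^2 + 2*b1*b2 + n*b2^2 + e^2 + f^2 := by
    refine mul_left_cancel₀ hn0 ?_
    linear_combination ((n:ℝ)*cu+p2+p1)*hcu + ((n:ℝ)*cv+q2+q1)*hcv + G1 - F1
  have hc_bc : p1*cv + cu*q1 + (n:ℝ)*(cu*cv) + q1*cw + cv*s1 + n*(cv*cw)
      = a1*c2 + a2*c1 + n*(a2*c2) + b1*d2 + b2*d1 + n*(b2*d2) + e*g + f*h := by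
    refine mul_left_cancel₀ hn0 ?_
    linear_combination q2*hcu + (p1+s2+(n:ℝ)*cu)*hcv + (q1+(n:ℝ)*cv)*hcw + G2 - F2
  have hc_cc : 2*q1*cv + (n:ℝ)*(cv*cv) + 2*s1*cw + n*(cw*cw)
      = 2*c1*c2 + n*c2^2 + 2*d1*d2 + n*d2^2 + g^2 + h^2 := by
    refine mul_left_cancel₀ hn0 ?_
    linear_combination ((n:ℝ)*cv+q2+q1)*hcv + ((n:ℝ)*cw+s2+s1)*hcw + G3 - F3
  ext x y
  rcases x with j | j <;> rcases y with k | k <;>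
    simp only [Matrix.mul_apply, Matrix.conjTranspose_apply, Fintype.sum_sum_type,
      Fin.sum_univ_two, Smat, restrictedW, star_trivial] <;>
    rw [sum_if_mul_mid, sum_if_mul_mid, sum_if_mul_left, sum_if_mul_left] <;>
    simp only [show (1 : Fin 2) ≠ 0 by decide, if_true, if_false] <;>
    split_ifs <;>
    [linear_combination F1 + hc_bb; linear_combination hc_bb;
     linear_combination F2 + hc_bc; linear_combination hc_bc;
     linear_combination F2 + hc_bc; linear_combination hc_bc;
     linear_combination F3 + hc_cc; linear_combination hc_cc]

lemma Smat_posSemidef (n : ℕ) (hn : 0 < n) (p1 q1 s1 p2 q2 s2 cu cv cw : ℝ)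
    (hp1 : 0 ≤ p1) (hs1 : 0 ≤ s1) (hq1 : q1^2 ≤ p1*s1)
    (hp2 : 0 ≤ p2) (hs2 : 0 ≤ s2) (hq2 : q2^2 ≤ p2*s2)
    (hcu : (n:ℝ)*cu = p2 - p1) (hcv : (n:ℝ)*cv = q2 - q1) (hcw : (n:ℝ)*cw = s2 - s1) :
    (Smat n p1 q1 s1 cu cv cw).PosSemidef := by
  refine Matrix.PosSemidef.of_dotProduct_mulVec_nonneg ?_ ?_
  · ext x y
    rcases x with j | j <;> rcases y with k | k <;>
      simp [Smat, Matrix.conjTranspose_apply, eq_comm]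
  · intro x
    have hval : dotProduct (star x) (Smat n p1 q1 s1 cu cv cw *ᵥ x)
        = ∑ j : Fin n, (x (Sum.inl j) *
            ((p1 * x (Sum.inl j) + cu * ∑ i, x (Sum.inl i))
              + (q1 * x (Sum.inr j) + cv * ∑ i, x (Sum.inr i))))
          + ∑ j : Fin n, (x (Sum.inr j) *
            ((q1 * x (Sum.inl j) + cv * ∑ i, x (Sum.inl i))
              + (s1 * x (Sum.inr j) + cw * ∑ i, x (Sum.inr i)))) := by
      simp only [dotProduct, Matrix.mulVec, Fintype.sum_sum_type, Smat,
        star_trivial, Pi.star_apply, sum_if_vec]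
    rw [hval]
    have hA : (∑ j : Fin n, (x (Sum.inl j) *
            ((p1 * x (Sum.inl j) + cu * ∑ i, x (Sum.inl i))
              + (q1 * x (Sum.inr j) + cv * ∑ i, x (Sum.inr i)))))
        = p1 * ∑ j, (x (Sum.inl j))^2 + q1 * ∑ j, (x (Sum.inl j) * x (Sum.inr j))
          + (cu * (∑ i, x (Sum.inl i)) + cv * (∑ i, x (Sum.inr i))) * ∑ i, x (Sum.inl i) := by
      rw [Finset.sum_congr rfl fun j _ => show x (Sum.inl j) *
            ((p1 * x (Sum.inl j) + cu * ∑ i, x (Sum.inl i))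
              + (q1 * x (Sum.inr j) + cv * ∑ i, x (Sum.inr i)))
          = p1 * (x (Sum.inl j))^2 + q1 * (x (Sum.inl j) * x (Sum.inr j))
            + (cu * (∑ i, x (Sum.inl i)) + cv * (∑ i, x (Sum.inr i))) * x (Sum.inl j) from by ring]
      rw [Finset.sum_add_distrib, Finset.sum_add_distrib, ← Finset.mul_sum, ← Finset.mul_sum,
        ← Finset.mul_sum]
    have hB : (∑ j : Fin n, (x (Sum.inr j) *
            ((q1 * x (Sum.inl j) + cv * ∑ i, x (Sum.inl i))
              + (s1 * x (Sum.inr j) + cw * ∑ i, x (Sum.inr i)))))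
        = s1 * ∑ j, (x (Sum.inr j))^2 + q1 * ∑ j, (x (Sum.inl j) * x (Sum.inr j))
          + (cv * (∑ i, x (Sum.inl i)) + cw * (∑ i, x (Sum.inr i))) * ∑ i, x (Sum.inr i) := by
      rw [Finset.sum_congr rfl fun j _ => show x (Sum.inr j) *
            ((q1 * x (Sum.inl j) + cv * ∑ i, x (Sum.inl i))
              + (s1 * x (Sum.inr j) + cw * ∑ i, x (Sum.inr i)))
          = s1 * (x (Sum.inr j))^2 + q1 * (x (Sum.inl j) * x (Sum.inr j))
            + (cv * (∑ i, x (Sum.inl i)) + cw * (∑ i, x (Sum.inr i))) * x (Sum.inr j) from by ring]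
      rw [Finset.sum_add_distrib, Finset.sum_add_distrib, ← Finset.mul_sum, ← Finset.mul_sum,
        ← Finset.mul_sum]
    rw [hA, hB]
    have hC : (∑ i : Fin n, (p1 * ((n:ℝ) * x (Sum.inl i) - ∑ i, x (Sum.inl i))^2
          + 2*q1 * (((n:ℝ) * x (Sum.inl i) - ∑ i, x (Sum.inl i))
              * ((n:ℝ) * x (Sum.inr i) - ∑ i, x (Sum.inr i)))
          + s1 * ((n:ℝ) * x (Sum.inr i) - ∑ i, x (Sum.inr i))^2))
        = p1 * ((n:ℝ)^2 * ∑ j, (x (Sum.inl j))^2 - (n:ℝ) * (∑ i, x (Sum.inl i))^2)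
          + 2*q1 * ((n:ℝ)^2 * ∑ j, (x (Sum.inl j) * x (Sum.inr j))
              - (n:ℝ) * ((∑ i, x (Sum.inl i)) * (∑ i, x (Sum.inr i))))
          + s1 * ((n:ℝ)^2 * ∑ j, (x (Sum.inr j))^2 - (n:ℝ) * (∑ i, x (Sum.inr i))^2) := by
      rw [Finset.sum_congr rfl fun i _ => show
          (p1 * ((n:ℝ) * x (Sum.inl i) - ∑ i, x (Sum.inl i))^2
          + 2*q1 * (((n:ℝ) * x (Sum.inl i) - ∑ i, x (Sum.inl i))
              * ((n:ℝ) * x (Sum.inr i) - ∑ i, x (Sum.inr i)))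
          + s1 * ((n:ℝ) * x (Sum.inr i) - ∑ i, x (Sum.inr i))^2)
          = (p1 * (n:ℝ)^2) * (x (Sum.inl i))^2 + (2*q1*(n:ℝ)^2) * (x (Sum.inl i) * x (Sum.inr i))
            + (s1 * (n:ℝ)^2) * (x (Sum.inr i))^2
            + (-(2*p1*(n:ℝ)) * (∑ i, x (Sum.inl i)) - 2*q1*(n:ℝ) * (∑ i, x (Sum.inr i))) * x (Sum.inl i)
            + (-(2*s1*(n:ℝ)) * (∑ i, x (Sum.inr i)) - 2*q1*(n:ℝ) * (∑ i, x (Sum.inl i))) * x (Sum.inr i)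
            + (p1 * (∑ i, x (Sum.inl i))^2 + 2*q1 * ((∑ i, x (Sum.inl i)) * (∑ i, x (Sum.inr i)))
                + s1 * (∑ i, x (Sum.inr i))^2) from by ring]
      rw [Finset.sum_add_distrib, Finset.sum_add_distrib, Finset.sum_add_distrib,
        Finset.sum_add_distrib, Finset.sum_add_distrib, ← Finset.mul_sum, ← Finset.mul_sum,
        ← Finset.mul_sum, ← Finset.mul_sum, ← Finset.mul_sum, Finset.sum_const,
        Finset.card_univ, Fintype.card_fin, nsmul_eq_mul]
      ring
    have hT1 : (0:ℝ) ≤ ∑ i : Fin n, (p1 * ((n:ℝ) * x (Sum.inl i) - ∑ i, x (Sum.inl i))^2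
          + 2*q1 * (((n:ℝ) * x (Sum.inl i) - ∑ i, x (Sum.inl i))
              * ((n:ℝ) * x (Sum.inr i) - ∑ i, x (Sum.inr i)))
          + s1 * ((n:ℝ) * x (Sum.inr i) - ∑ i, x (Sum.inr i))^2) :=
      Finset.sum_nonneg fun i _ => by
        have := quad_nonneg' p1 q1 s1 ((n:ℝ) * x (Sum.inl i) - ∑ i, x (Sum.inl i))
          ((n:ℝ) * x (Sum.inr i) - ∑ i, x (Sum.inr i)) hp1 hs1 hq1
        linarith
    have hq2' := quad_nonneg' p2 q2 s2 (∑ i, x (Sum.inl i)) (∑ i, x (Sum.inr i)) hp2 hs2 hq2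
    have hT2 : (0:ℝ) ≤ (n:ℝ) * (p2 * (∑ i, x (Sum.inl i))^2
          + 2*q2 * ((∑ i, x (Sum.inl i)) * (∑ i, x (Sum.inr i)))
          + s2 * (∑ i, x (Sum.inr i))^2) :=
      mul_nonneg (by positivity) (by linarith)
    have hn2 : (0:ℝ) < (n:ℝ)^2 := by positivity
    have key : (n:ℝ)^2 * ((p1 * ∑ j, (x (Sum.inl j))^2 + q1 * ∑ j, (x (Sum.inl j) * x (Sum.inr j))
          + (cu * (∑ i, x (Sum.inl i)) + cv * (∑ i, x (Sum.inr i))) * ∑ i, x (Sum.inl i))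
        + (s1 * ∑ j, (x (Sum.inr j))^2 + q1 * ∑ j, (x (Sum.inl j) * x (Sum.inr j))
          + (cv * (∑ i, x (Sum.inl i)) + cw * (∑ i, x (Sum.inr i))) * ∑ i, x (Sum.inr i)))
        = (∑ i : Fin n, (p1 * ((n:ℝ) * x (Sum.inl i) - ∑ i, x (Sum.inl i))^2
          + 2*q1 * (((n:ℝ) * x (Sum.inl i) - ∑ i, x (Sum.inl i))
              * ((n:ℝ) * x (Sum.inr i) - ∑ i, x (Sum.inr i)))
          + s1 * ((n:ℝ) * x (Sum.inr i) - ∑ i, x (Sum.inr i))^2))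
          + (n:ℝ) * (p2 * (∑ i, x (Sum.inl i))^2
          + 2*q2 * ((∑ i, x (Sum.inl i)) * (∑ i, x (Sum.inr i)))
          + s2 * (∑ i, x (Sum.inr i))^2) := by
      linear_combination -hC + ((n:ℝ)*(∑ i, x (Sum.inl i))^2)*hcu
        + (2*(n:ℝ)*(∑ i, x (Sum.inl i))*(∑ i, x (Sum.inr i)))*hcv
        + ((n:ℝ)*(∑ i, x (Sum.inr i))^2)*hcw
    nlinarith [hT1, hT2, key, hn2]

lemma Smat_trace (n : ℕ) (p1 q1 s1 cu cv cw : ℝ) :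
    (Smat n p1 q1 s1 cu cv cw).trace = n*(p1+cu) + n*(s1+cw) := by
  simp [Matrix.trace, Matrix.diag, Smat, Fintype.sum_sum_type, Finset.sum_const,
    Finset.card_univ, mul_add]

/-- Lemma 2: explicit formula for the nuclear norm of a restricted-form matrix. -/
theorem nuclearNorm_restrictedW (n : ℕ) (hn : 1 ≤ n)
    (a1 a2 b1 b2 c1 c2 d1 d2 e f g h : ℝ) :
    nuclearNorm (restrictedW n a1 a2 b1 b2 c1 c2 d1 d2 e f g h) =
      ((n : ℝ) - 1) * Real.sqrt (CA1 a1 b1 + CD1 c1 d1 + 2 * |a1 * d1 - b1 * c1|) +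
        Real.sqrt (CA1 a1 b1 + n * CA2 n a1 a2 b1 b2 e f
          + CD1 c1 d1 + n * CD2 n c1 c2 d1 d2 g h
          + 2 * Real.sqrt ((CA1 a1 b1 + n * CA2 n a1 a2 b1 b2 e f)
              * (CD1 c1 d1 + n * CD2 n c1 c2 d1 d2 g h)
            - (CB1 a1 b1 c1 d1 + n * CB2 n a1 a2 b1 b2 c1 c2 d1 d2 e f g h) ^ 2)) := by
  have hn0 : (n:ℝ) ≠ 0 := Nat.cast_ne_zero.mpr (by omega)
  -- abbreviations
  set P : ℝ := CA1 a1 b1 + n * CA2 n a1 a2 b1 b2 e f with hPdef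
  set Q : ℝ := CD1 c1 d1 + n * CD2 n c1 c2 d1 d2 g h with hQdef
  set R : ℝ := CB1 a1 b1 c1 d1 + n * CB2 n a1 a2 b1 b2 c1 c2 d1 d2 e f g h with hRdef
  rw [show CA1 a1 b1 + ↑n * CA2 n a1 a2 b1 b2 e f + CD1 c1 d1 + ↑n * CD2 n c1 c2 d1 d2 g h
        + 2 * Real.sqrt (P * Q - R ^ 2) = P + Q + 2 * Real.sqrt (P * Q - R ^ 2) from by
      rw [hPdef, hQdef]; ring]
  set δ1 : ℝ := |a1 * d1 - b1 * c1| with hδ1def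
  set δ2 : ℝ := Real.sqrt (P * Q - R ^ 2) with hδ2def
  set t1 : ℝ := Real.sqrt (CA1 a1 b1 + CD1 c1 d1 + 2 * δ1) with ht1def
  set t2 : ℝ := Real.sqrt (P + Q + 2 * δ2) with ht2def
  -- facts about block 1
  have hA1 : 0 ≤ CA1 a1 b1 := by unfold CA1; positivity
  have hD1 : 0 ≤ CD1 c1 d1 := by unfold CD1; positivity
  have hδ1sq : δ1 ^ 2 = CA1 a1 b1 * CD1 c1 d1 - CB1 a1 b1 c1 d1 ^ 2 := by
    rw [hδ1def, sq_abs]; unfold CA1 CD1 CB1; ring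
  obtain ⟨F1, F2, F3, hp1, hs1, hq1, hsum1⟩ :=
    sqrt2_facts (CA1 a1 b1) (CD1 c1 d1) (CB1 a1 b1 c1 d1) δ1 t1
      ((CA1 a1 b1 + δ1)/t1) (CB1 a1 b1 c1 d1/t1) ((CD1 c1 d1 + δ1)/t1)
      hA1 hD1 (abs_nonneg _) hδ1sq ht1def rfl rfl rfl
  -- facts about block 2
  have hP : 0 ≤ P := by
    rw [show P = (a1+n*a2)^2 + (b1+n*b2)^2 + n*e^2 + n*f^2 from by
      rw [hPdef]; unfold CA1 CA2; ring]
    positivity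
  have hQ : 0 ≤ Q := by
    rw [show Q = (c1+n*c2)^2 + (d1+n*d2)^2 + n*g^2 + n*h^2 from by
      rw [hQdef]; unfold CD1 CD2; ring]
    positivity
  have hdet2 : 0 ≤ P * Q - R ^ 2 := by
    have hid : P * Q - R ^ 2
        = ((a1+n*a2)*(d1+n*d2) - (b1+n*b2)*(c1+n*c2))^2
          + n*(((a1+n*a2)*g - (c1+n*c2)*e)^2 + ((a1+n*a2)*h - (c1+n*c2)*f)^2
            + ((b1+n*b2)*g - (d1+n*d2)*e)^2 + ((b1+n*b2)*h - (d1+n*d2)*f)^2)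
          + (n:ℝ)^2*(e*h - f*g)^2 := by
      rw [hPdef, hQdef, hRdef]; unfold CA1 CA2 CD1 CD2 CB1 CB2; ring
    rw [hid]; positivity
  have hδ2sq : δ2 ^ 2 = P * Q - R ^ 2 := by rw [hδ2def]; exact Real.sq_sqrt hdet2
  obtain ⟨G1, G2, G3, hp2, hs2, hq2, hsum2⟩ :=
    sqrt2_facts P Q R δ2 t2 ((P + δ2)/t2) (R/t2) ((Q + δ2)/t2)
      hP hQ (Real.sqrt_nonneg _) hδ2sq ht2def rfl rfl rfl
  -- the square root matrix
  set p1 : ℝ := (CA1 a1 b1 + δ1)/t1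
  set q1 : ℝ := CB1 a1 b1 c1 d1/t1
  set s1 : ℝ := (CD1 c1 d1 + δ1)/t1
  set p2 : ℝ := (P + δ2)/t2
  set q2 : ℝ := R/t2
  set s2 : ℝ := (Q + δ2)/t2
  set cu : ℝ := (p2 - p1)/n with hcudef
  set cv : ℝ := (q2 - q1)/n with hcvdef
  set cw : ℝ := (s2 - s1)/n with hcwdef
  have hcu : (n:ℝ)*cu = p2 - p1 := by rw [hcudef]; field_simp
  have hcv : (n:ℝ)*cv = q2 - q1 := by rw [hcvdef]; field_simp
  have hcw : (n:ℝ)*cw = s2 - s1 := by rw [hcwdef]; field_simp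
  have hsq : Smat n p1 q1 s1 cu cv cw * Smat n p1 q1 s1 cu cv cw
      = (restrictedW n a1 a2 b1 b2 c1 c2 d1 d2 e f g h)ᴴ
        * restrictedW n a1 a2 b1 b2 c1 c2 d1 d2 e f g h := by
    refine Smat_sq n a1 a2 b1 b2 c1 c2 d1 d2 e f g h p1 q1 s1 p2 q2 s2 cu cv cw hn0
      ?_ ?_ ?_ ?_ ?_ ?_ hcu hcv hcw
    · unfold CA1 at F1; linear_combination F1
    · unfold CB1 at F2; linear_combination F2
    · unfold CD1 at F3; linear_combination F3
    · rw [hPdef] at G1; unfold CA1 CA2 at G1; linear_combination G1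
    · rw [hRdef] at G2; unfold CB1 CB2 at G2; linear_combination G2
    · rw [hQdef] at G3; unfold CD1 CD2 at G3; linear_combination G3
  have hpsd : (Smat n p1 q1 s1 cu cv cw).PosSemidef :=
    Smat_posSemidef n (by omega) p1 q1 s1 p2 q2 s2 cu cv cw
      hp1 hs1 hq1 hp2 hs2 hq2 hcu hcv hcw
  have hS : Smat n p1 q1 s1 cu cv cw
      = CFC.sqrt ((restrictedW n a1 a2 b1 b2 c1 c2 d1 d2 e f g h)ᴴ * (restrictedW n a1 a2 b1 b2 c1 c2 d1 d2 e f g h)) := by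
    open scoped MatrixOrder in exact (CFC.sqrt_unique hsq hpsd.nonneg).symm
  have hN : nuclearNorm (restrictedW n a1 a2 b1 b2 c1 c2 d1 d2 e f g h) = (CFC.sqrt ((restrictedW n a1 a2 b1 b2 c1 c2 d1 d2 e f g h)ᴴ * (restrictedW n a1 a2 b1 b2 c1 c2 d1 d2 e f g h))).trace := by
    open scoped MatrixOrder in
    rw [CFC.sqrt_eq_cfc, cfc_nnreal_eq_real _ _ (Matrix.posSemidef_conjTranspose_mul_self (restrictedW n a1 a2 b1 b2 c1 c2 d1 d2 e f g h)).nonneg,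
      (Matrix.posSemidef_conjTranspose_mul_self (restrictedW n a1 a2 b1 b2 c1 c2 d1 d2 e f g h)).1.cfc_eq, Matrix.IsHermitian.cfc,
      Unitary.conjStarAlgAut_apply]
    unfold nuclearNorm
    congr 4
    ext i
    simp only [Function.comp_apply, Real.sqrt.eq_1]
  show nuclearNorm _ = _
  rw [hN, ← hS, Smat_trace]
  linear_combination hcu + hcw + ((n:ℝ)-1)*hsum1 + hsum2
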